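/- Let k ≥ 2 be an integer and q ∈ (0,1). Then for every x ∈ [0,1], ∫₀ˣ λ_q(t)dt = (D_q(x) - q) / (q·k·(1-q)·D_q(x)). -/

import Mathlib

/-- `D_q(x) = 1 - (1-q)(1 - kx + (k-1)(1 - (1-x)^{k/(k-1)}))`. -/
noncomputable def Dq (k : ℕ) (q x : ℝ) : ℝ :=
  1 - (1 - q) * (1 - k * x + ((k : ℝ) - 1) * (1 - (1 - x) ^ ((k : ℝ) / ((k : ℝ) - 1))))

/-- The check-regular variable degree distribution
`λ_q(x) = (1 - (1-x)^{1/(k-1)}) / D_q(x)²`. -/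
noncomputable def lamq (k : ℕ) (q x : ℝ) : ℝ :=
  (1 - (1 - x) ^ (1 / ((k : ℝ) - 1))) / (Dq k q x) ^ 2

lemma hasDerivAt_Dq (k : ℕ) (hk : 2 ≤ k) (q t : ℝ) :
    HasDerivAt (Dq k q) ((1 - q) * k * (1 - (1 - t) ^ (1 / ((k : ℝ) - 1)))) t := by
  have hk2 : (2:ℝ) ≤ (k:ℝ) := by exact_mod_cast hk
  have hr : (0:ℝ) < (k:ℝ) - 1 := by linarith
  have hp1 : (1:ℝ) ≤ (k:ℝ) / ((k:ℝ) - 1) := by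
    rw [le_div_iff₀ hr]; linarith
  have h1 : HasDerivAt (fun x : ℝ => 1 - x) (-1) t := (hasDerivAt_id t).const_sub 1
  have h2 : HasDerivAt (fun x : ℝ => (1 - x) ^ ((k : ℝ) / ((k : ℝ) - 1)))
      ((-1) * ((k : ℝ) / ((k : ℝ) - 1)) * (1 - t) ^ ((k : ℝ) / ((k : ℝ) - 1) - 1)) t :=
    h1.rpow_const (Or.inr hp1)
  have he : (k : ℝ) / ((k:ℝ) - 1) - 1 = 1 / ((k:ℝ) - 1) := by
    field_simp
    ring
  rw [he] at h2
  have h3 : HasDerivAt (Dq k q)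
      (-((1 - q) * ((-((k:ℝ)*1)) + ((k:ℝ) - 1) * (-((-1) * ((k : ℝ) / ((k : ℝ) - 1)) * (1 - t) ^ (1 / ((k:ℝ) - 1))))))) t := by
    unfold Dq
    exact (((((hasDerivAt_id t).const_mul (k:ℝ)).const_sub 1).add
      ((h2.const_sub 1).const_mul ((k:ℝ)-1))).const_mul (1-q)).const_sub 1
  convert h3 using 1
  have hne : (k:ℝ) - 1 ≠ 0 := ne_of_gt hr
  field_simp
  ring

theorem stmt9 (k : ℕ) (hk : 2 ≤ k) (q : ℝ) (hq : q ∈ Set.Ioo (0 : ℝ) 1)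
    (x : ℝ) (hx : x ∈ Set.Icc (0 : ℝ) 1) :
    (∫ t in (0 : ℝ)..x, lamq k q t)
      = (Dq k q x - q) / (q * k * (1 - q) * Dq k q x) := by
  obtain ⟨hq0, hq1⟩ := hq
  obtain ⟨hx0, hx1⟩ := hx
  have hk2 : (2:ℝ) ≤ (k:ℝ) := by exact_mod_cast hk
  have hr : (0:ℝ) < (k:ℝ) - 1 := by linarith
  have hqq : (0:ℝ) < 1 - q := by linarith
  have hkpos : (0:ℝ) < (k:ℝ) := by linarith
  have hdiff : Differentiable ℝ (Dq k q) := fun t => (hasDerivAt_Dq k hk q t).differentiableAt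
  have hD0 : Dq k q 0 = q := by simp [Dq]
  -- Monotone on [0,1]
  have hmono : MonotoneOn (Dq k q) (Set.Icc (0:ℝ) 1) := by
    apply monotoneOn_of_deriv_nonneg (convex_Icc 0 1) hdiff.continuous.continuousOn
      hdiff.differentiableOn
    intro t ht
    rw [interior_Icc] at ht
    rw [(hasDerivAt_Dq k hk q t).deriv]
    have h1 : (1 - t) ^ (1 / ((k:ℝ) - 1)) ≤ 1 :=
      Real.rpow_le_one (by linarith [ht.2]) (by linarith [ht.1]) (by positivity)
    exact mul_nonneg (by positivity) (by linarith)
  have hDpos : ∀ t ∈ Set.Icc (0:ℝ) x, 0 < Dq k q t := by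
    intro t ht
    have h2 : Dq k q 0 ≤ Dq k q t :=
      hmono (by constructor <;> norm_num) ⟨ht.1, le_trans ht.2 hx1⟩ ht.1
    rw [hD0] at h2
    linarith
  have huicc : Set.uIcc (0:ℝ) x = Set.Icc 0 x := Set.uIcc_of_le hx0
  -- antiderivative
  set F : ℝ → ℝ := fun t => -(((1 - q) * k * Dq k q t)⁻¹) with hF
  have hderivF : ∀ t ∈ Set.uIcc (0:ℝ) x, HasDerivAt F (lamq k q t) t := by
    intro t ht
    rw [huicc] at ht
    have hDt := hDpos t ht
    have hne : (1 - q) * k * Dq k q t ≠ 0 := by positivity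
    have h := ((((hasDerivAt_Dq k hk q t).const_mul ((1 - q) * k)).inv hne).neg)
    refine h.congr_deriv ?_
    symm
    unfold lamq
    field_simp
  have hcont : ContinuousOn (lamq k q) (Set.uIcc (0:ℝ) x) := by
    rw [huicc]
    apply ContinuousOn.div
    · refine (continuous_const.sub ?_).continuousOn
      exact (Real.continuous_rpow_const (by positivity)).comp (continuous_const.sub continuous_id)
    · exact ((hdiff.continuous.pow 2)).continuousOn
    · intro t ht
      exact pow_ne_zero 2 (ne_of_gt (hDpos t ht))
  rw [intervalIntegral.integral_eq_sub_of_hasDerivAt hderivF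
    (hcont.intervalIntegrable)]
  have hDx : 0 < Dq k q x := hDpos x ⟨hx0, le_refl x⟩
  rw [hF]
  simp only [hD0]
  field_simp
  ring
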